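/- arXiv:0905.2420 — 4 statements merged into one kernel-verified Lean document; each statement's English description precedes it below -/
import Mathlib

section
/- Let p < q be odd primes. Then the cycle C_p is not a homogeneous minor of the cycle C_q: there is no connected graph H' such that (C_p, H') ≼₁ C_q with all p partition sets inducing subgraphs isomorphic to H'. -/
open SimpleGraph
open Fin.NatCast Fin.CommRing

private def Run {n : ℕ} (x : Fin (n + 2)) (m : ℕ) : Set (Fin (n + 2)) :=
  {y | ∃ i < m, y = x - (i : ℕ)}

private lemma eq_univ_of_succ_closed {n : ℕ} {S : Set (Fin (n + 2))} {x : Fin (n + 2)}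
    (hx : x ∈ S) (h : ∀ y ∈ S, y + 1 ∈ S) : S = Set.univ := by
  have key : ∀ k : ℕ, x + (k : Fin (n + 2)) ∈ S := by
    intro k
    induction k with
    | zero => simpa using hx
    | succ k ih =>
      have h2 := h _ ih
      have h3 : ((k + 1 : ℕ) : Fin (n+2)) = ((k : ℕ) : Fin (n+2)) + 1 := by push_cast; ring
      rw [h3, ← add_assoc]
      exact h2
  ext z
  simp only [Set.mem_univ, iff_true]
  have := key (z - x).val
  have h3 : x + (((z - x).val : ℕ) : Fin (n+2)) = z := by rw [Fin.cast_val_eq_self]; ring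
  rwa [h3] at this

private lemma eq_univ_of_pred_all {n : ℕ} {S : Set (Fin (n + 2))} {x : Fin (n + 2)}
    (h : ∀ k : ℕ, k < n + 2 → x - (k : ℕ) ∈ S) : S = Set.univ := by
  ext z
  simp only [Set.mem_univ, iff_true]
  have := h (x - z).val (Fin.is_lt _)
  have h3 : x - (((x - z).val : ℕ) : Fin (n+2)) = z := by rw [Fin.cast_val_eq_self]; ring
  rwa [h3] at this

private lemma ncard_run {n : ℕ} (x : Fin (n + 2)) {m : ℕ} (hm : m ≤ n + 2) :
    (Run x m).ncard = m := by
  have himg : Run x m = (fun i : ℕ => x - (i : Fin (n+2))) '' Set.Iio m := by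
    ext y
    simp only [Run, Set.mem_setOf_eq, Set.mem_image, Set.mem_Iio]
    constructor
    · rintro ⟨i, hi, rfl⟩; exact ⟨i, hi, rfl⟩
    · rintro ⟨i, hi, rfl⟩; exact ⟨i, hi, rfl⟩
  rw [himg, Set.ncard_image_of_injOn]
  · rw [← Finset.coe_Iio, Set.ncard_coe_finset, Nat.card_Iio]
  · intro i hi j hj hij
    simp only [Set.mem_Iio] at hi hj
    have : ((i:ℕ) : Fin (n+2)) = ((j:ℕ) : Fin (n+2)) := by
      have := sub_right_injective hij
      exact this
    have := congrArg Fin.val this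
    rwa [Fin.val_cast_of_lt (by omega), Fin.val_cast_of_lt (by omega)] at this

private lemma arc_of_connected {n : ℕ} {S : Set (Fin (n + 2))}
    (hconn : ((cycleGraph (n + 2)).induce S).Connected) (hproper : S ≠ Set.univ) :
    ∃ x m, 0 < m ∧ m < n + 2 ∧ S = Run x m := by
  classical
  obtain ⟨⟨x0, hx0⟩⟩ := hconn.nonempty
  obtain ⟨x, hxS, hx1⟩ : ∃ x ∈ S, x + 1 ∉ S := by
    by_contra hcon
    push_neg at hcon
    exact hproper (eq_univ_of_succ_closed hx0 hcon)
  have hex : ∃ k : ℕ, x - ((k : ℕ) : Fin (n+2)) ∉ S := by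
    by_contra hcon
    push_neg at hcon
    exact hproper (eq_univ_of_pred_all (fun k _ => hcon k))
  set m := Nat.find hex with hmdef
  have hm : x - ((m : ℕ) : Fin (n+2)) ∉ S := Nat.find_spec hex
  have hmin : ∀ i < m, x - ((i : ℕ) : Fin (n+2)) ∈ S := by
    intro i hi
    have := Nat.find_min hex hi
    simpa using this
  have hm0 : 0 < m := by
    rcases Nat.eq_zero_or_pos m with h0 | h0
    · exfalso; apply hm; rw [h0]; simpa using hxS
    · exact h0
  have hmlt : m < n + 2 := by
    by_contra hge
    push_neg at hge
    exact hproper (eq_univ_of_pred_all (fun i hi => hmin i (lt_of_lt_of_le hi hge)))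
  refine ⟨x, m, hm0, hmlt, ?_⟩
  have hwalk : ∀ (u v : ↥S) (w : ((cycleGraph (n+2)).induce S).Walk u v),
      (v : Fin (n+2)) ∈ Run x m → (u : Fin (n+2)) ∈ Run x m := by
    intro u v w
    induction w with
    | nil => exact id
    | @cons u b _ hadj w ih =>
      intro hv
      obtain ⟨i, hi, hb⟩ := ih hv
      have hadj' : (cycleGraph (n+2)).Adj (u : Fin (n+2)) (b : Fin (n+2)) := hadj
      rw [cycleGraph_adj] at hadj'
      rcases hadj' with h1 | h1
      · -- u - b = 1, so u = b + 1
        rw [sub_eq_iff_eq_add] at h1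
        rcases Nat.eq_zero_or_pos i with h0 | h0
        · exfalso
          apply hx1
          have : (u : Fin (n+2)) = x + 1 := by rw [h1, hb, h0]; push_cast; ring
          rw [← this]; exact u.2
        · obtain ⟨j, rfl⟩ := Nat.exists_eq_succ_of_ne_zero (Nat.pos_iff_ne_zero.1 h0)
          refine ⟨j, by omega, ?_⟩
          rw [h1, hb]; push_cast; ring
      · -- b - u = 1, so u = b - 1
        rw [sub_eq_iff_eq_add] at h1
        have hu : (u : Fin (n+2)) = x - (((i+1 : ℕ) : ℕ) : Fin (n+2)) := by
          have h2 : (u : Fin (n+2)) = (b : Fin (n+2)) - 1 := by rw [h1]; ring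
          rw [h2, hb]; push_cast; ring
        rcases lt_or_ge (i+1) m with hlt | hge
        · exact ⟨i+1, hlt, hu⟩
        · exfalso
          have h3 : i + 1 = m := by omega
          apply hm
          rw [← h3, ← hu]
          exact u.2
  ext y
  constructor
  · intro hy
    exact hwalk ⟨y, hy⟩ ⟨x, hxS⟩ (hconn.preconnected ⟨y, hy⟩ ⟨x, hxS⟩).some ⟨0, hm0, by simp⟩
  · rintro ⟨i, hi, rfl⟩
    exact hmin i hi

private lemma mem_run {n : ℕ} {x y : Fin (n+2)} {m : ℕ} :
    y ∈ Run x m ↔ ∃ i < m, y = x - ((i:ℕ) : Fin (n+2)) := Iff.rfl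



/-- `(H, H')` is a homogeneous minor of `G`, written `(H,H') ≼₁ G`: `H'` is connected and
there are pairwise disjoint vertex sets `{V_h}` in `G`, each inducing a subgraph of `G`
isomorphic to `H'`, with an edge of `G` between `V_h` and `V_h'` whenever `h h' ∈ E(H)`. -/
def HomMinor {α β γ : Type*} (H : SimpleGraph α) (H' : SimpleGraph β) (G : SimpleGraph γ) :
    Prop :=
  H'.Connected ∧ ∃ V : α → Set γ,
    (∀ a b, a ≠ b → Disjoint (V a) (V b)) ∧
    (∀ a, Nonempty (G.induce (V a) ≃g H')) ∧
    (∀ a b, H.Adj a b → ∃ x ∈ V a, ∃ y ∈ V b, G.Adj x y)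

theorem stmt_9 (p q : ℕ) (hp : p.Prime) (hq : q.Prime) (hop : Odd p) (hoq : Odd q)
    (hpq : p < q) :
    ∀ {β : Type} (H' : SimpleGraph β),
      ¬ HomMinor (SimpleGraph.cycleGraph p) H' (SimpleGraph.cycleGraph q) := by
  intro β H' hmin
  obtain ⟨hconn', V, hdis, hiso, hadj⟩ := hmin
  have hp2 := hp.two_le
  have hpodd : p % 2 = 1 := Nat.odd_iff.mp hop
  have hp3 : 3 ≤ p := by omega
  obtain ⟨pm, rfl⟩ : ∃ pm, p = pm + 2 := ⟨p - 2, by omega⟩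
  obtain ⟨qn, rfl⟩ : ∃ qn, q = qn + 2 := ⟨q - 2, by omega⟩
  classical
  set k := Nat.card β with hkdef
  have hVconn : ∀ a, ((cycleGraph (qn+2)).induce (V a)).Connected := fun a =>
    ((hiso a).some.connected_iff).mpr hconn'
  have hVcard : ∀ a, (V a).ncard = k := fun a => by
    rw [← Nat.card_coe_set_eq]
    exact Nat.card_congr (hiso a).some.toEquiv
  have hVne : ∀ a, (V a).Nonempty := fun a => by
    obtain ⟨⟨y, hy⟩⟩ := (hVconn a).nonempty; exact ⟨y, hy⟩
  have hone : (1 : Fin (pm+2)) ≠ 0 := by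
    intro h
    have := congrArg Fin.val h
    simp at this
  have haddone : ∀ a : Fin (pm+2), a + 1 ≠ a := by
    intro a h
    exact hone (by linear_combination h)
  have hVproper : ∀ a, V a ≠ Set.univ := by
    intro a hEq
    obtain ⟨y, hy⟩ := hVne (a + 1)
    have hd := hdis (a+1) a (haddone a)
    exact Set.disjoint_left.mp hd hy (hEq ▸ Set.mem_univ y)
  have key : ∀ a, ∃ x, V a = Run x k := by
    intro a
    obtain ⟨x, m, hm0, hmlt, hEq⟩ := arc_of_connected (hVconn a) (hVproper a)
    have hmk : m = k := by
      rw [← hVcard a, hEq, ncard_run x (le_of_lt hmlt)]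
    exact ⟨x, by rw [hEq, hmk]⟩
  choose x hx using key
  obtain ⟨x0, m0, hm00, hm0lt, hEq0⟩ := arc_of_connected (hVconn 0) (hVproper 0)
  have hm0k : m0 = k := by rw [← hVcard 0, hEq0, ncard_run x0 (le_of_lt hm0lt)]
  have hk0 : 0 < k := hm0k ▸ hm00
  have hklt : k < qn + 2 := hm0k ▸ hm0lt
  -- exit lemma
  have exit : ∀ a b : Fin (pm+2), a ≠ b → (cycleGraph (pm+2)).Adj a b →
      (x a + 1 ∈ V b ∨ x a - ((k:ℕ) : Fin (qn+2)) ∈ V b) := by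
    intro a b hne hab
    obtain ⟨u, hu, v, hv, huv⟩ := hadj a b hab
    have hvna : v ∉ V a := Set.disjoint_left.mp (hdis b a (Ne.symm hne)) hv
    rw [hx a] at hu
    rw [mem_run] at hu
    obtain ⟨i, hik, rfl⟩ := hu
    rw [cycleGraph_adj] at huv
    rcases huv with h1 | h1
    · -- u - v = 1, v = u - 1 = x a - (i+1)
      rw [sub_eq_iff_eq_add] at h1
      have hveq : v = x a - (((i+1:ℕ)) : Fin (qn+2)) := by
        have h2 : v = (x a - ((i:ℕ) : Fin (qn+2))) - 1 := by rw [h1]; ring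
        rw [h2]; push_cast; ring
      rcases lt_or_ge (i+1) k with hlt | hge
      · exact absurd (show v ∈ V a by rw [hx a, mem_run]; exact ⟨i+1, hlt, hveq⟩) hvna
      · have h3 : i + 1 = k := by omega
        right; rw [← h3]; exact hveq ▸ hv
    · -- v - u = 1, v = u + 1
      rw [sub_eq_iff_eq_add] at h1
      rcases Nat.eq_zero_or_pos i with h0 | h0
      · left
        have h2 : v = x a + 1 := by rw [h1, h0]; push_cast; ring
        exact h2 ▸ hv
      · obtain ⟨j, rfl⟩ := Nat.exists_eq_succ_of_ne_zero (n := i) (by omega)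
        exfalso
        apply hvna
        rw [hx a, mem_run]
        refine ⟨j, by omega, ?_⟩
        rw [h1]; push_cast; ring
  -- a+1 ≠ a-1
  have h2ne : ∀ a : Fin (pm+2), a + 1 ≠ a - 1 := by
    intro a h
    have h2 : ((2:ℕ) : Fin (pm+2)) = 0 := by
      push_cast
      linear_combination h
    have := congrArg Fin.val h2
    rw [Fin.val_cast_of_lt (by omega)] at this
    simp at this
  have hadj1 : ∀ a : Fin (pm+2), (cycleGraph (pm+2)).Adj a (a+1) := by
    intro a
    rw [cycleGraph_adj]
    right; ring
  have hadj2 : ∀ a : Fin (pm+2), (cycleGraph (pm+2)).Adj a (a-1) := by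
    intro a
    rw [cycleGraph_adj]
    left; ring
  -- union is everything
  have hU : (⋃ a, V a) = Set.univ := by
    apply eq_univ_of_succ_closed (x := x 0)
    · exact Set.mem_iUnion.mpr ⟨0, by rw [hx 0, mem_run]; exact ⟨0, hk0, by simp⟩⟩
    · intro y hy
      obtain ⟨a, ha⟩ := Set.mem_iUnion.mp hy
      rw [hx a, mem_run] at ha
      obtain ⟨i, hik, rfl⟩ := ha
      rcases Nat.eq_zero_or_pos i with h0 | h0
      · have hy1 : x a - ((i:ℕ) : Fin (qn+2)) + 1 = x a + 1 := by rw [h0]; push_cast; ring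
        rw [hy1]
        have e1 := exit a (a+1) (Ne.symm (haddone a)) (hadj1 a)
        have e2 := exit a (a-1) (fun h => hone (by linear_combination h)) (hadj2 a)
        rcases e1 with e1 | e1
        · exact Set.mem_iUnion.mpr ⟨a+1, e1⟩
        rcases e2 with e2 | e2
        · exact Set.mem_iUnion.mpr ⟨a-1, e2⟩
        · exfalso
          exact Set.disjoint_left.mp (hdis (a+1) (a-1) (h2ne a)) e1 e2
      · obtain ⟨j, rfl⟩ := Nat.exists_eq_succ_of_ne_zero (n := i) (by omega)
        refine Set.mem_iUnion.mpr ⟨a, ?_⟩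
        rw [hx a, mem_run]
        exact ⟨j, by omega, by push_cast; ring⟩
  -- counting
  have hcount : qn + 2 = (pm + 2) * k := by
    have hfin : ∀ a, (V a).Finite := fun a => Set.toFinite _
    have hFcard : ∀ a : Fin (pm+2), ((hfin a).toFinset).card = k := fun a => by
      rw [← Set.ncard_eq_toFinset_card (V a) (hfin a)]; exact hVcard a
    have hUF : (Finset.univ : Finset (Fin (qn+2))) =
        Finset.univ.biUnion (fun a => (hfin a).toFinset) := by
      apply Finset.ext; intro z
      simp only [Finset.mem_univ, Finset.mem_biUnion, true_iff, Set.Finite.mem_toFinset]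
      have hz : z ∈ ⋃ a, V a := by rw [hU]; trivial
      obtain ⟨a, ha⟩ := Set.mem_iUnion.mp hz
      exact ⟨a, trivial, ha⟩
    have hcb := Finset.card_biUnion (s := (Finset.univ : Finset (Fin (pm+2))))
      (t := fun a => (hfin a).toFinset)
      (fun a _ b _ hab => by
        rw [Function.onFun, Set.Finite.disjoint_toFinset]
        exact hdis a b hab)
    calc qn + 2 = (Finset.univ : Finset (Fin (qn+2))).card := by simp
      _ = ∑ a : Fin (pm+2), ((hfin a).toFinset).card := by rw [hUF, hcb]
      _ = (pm + 2) * k := by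
          rw [Finset.sum_congr rfl (fun a _ => hFcard a)]
          simp [Finset.sum_const, mul_comm]
  have hdvd : (pm + 2) ∣ (qn + 2) := ⟨k, hcount⟩
  rcases hq.eq_one_or_self_of_dvd _ hdvd with h | h <;> omega
end

section
/- The homogeneous minor relation does not well-quasi-order the finite graphs: the infinite sequence C_3, C_5, C_7, C_11, … of cycles of odd prime lengths is an antichain, i.e., for all i < j there is no connected graph H' with (C_{p_i}, H') ≼₁ C_{p_j}. -/
open Finset SimpleGraph

/-- A finite connected graph on `k` vertices has at least `k - 1` edges. -/
lemma aux_card_le {γ : Type*} [Fintype γ] (G : SimpleGraph γ) [Fintype G.edgeSet]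
    (hc : G.Connected) : Fintype.card γ ≤ #G.edgeFinset + 1 := by
  classical
  obtain ⟨v0⟩ := hc.nonempty
  have H : ∀ v : γ, v ≠ v0 → ∃ u, G.Adj u v ∧ G.dist v0 u < G.dist v0 v := by
    intro v hv
    obtain ⟨p, hp⟩ := hc.exists_walk_length_eq_dist v0 v
    obtain ⟨u, h, q, hq⟩ := SimpleGraph.Walk.exists_eq_cons_of_ne hv p.reverse
    refine ⟨u, h.symm, ?_⟩
    have h1 : G.dist v0 u ≤ q.length := by
      simpa using G.dist_le q.reverse
    have h2 : q.length + 1 = G.dist v0 v := by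
      rw [← hp, ← p.length_reverse, hq, SimpleGraph.Walk.length_cons]
    omega
  choose u hadj hlt using H
  have key : (Finset.univ.erase v0).card ≤ #G.edgeFinset := by
    refine Finset.card_le_card_of_injOn
      (fun v => if h : v = v0 then s(v0, v0) else s(u v h, v)) ?_ ?_
    · intro v hv
      have hv' : v ≠ v0 := (Finset.mem_erase.mp hv).1
      dsimp only
      rw [dif_neg hv', Finset.mem_coe, mem_edgeFinset, SimpleGraph.mem_edgeSet]
      exact hadj v hv'
    · intro v1 hv1 v2 hv2 heq
      have h1 : v1 ≠ v0 := by simpa using hv1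
      have h2 : v2 ≠ v0 := by simpa using hv2
      simp only [dif_neg h1, dif_neg h2, Sym2.eq_iff] at heq
      rcases heq with ⟨-, h⟩ | ⟨ha, hb⟩
      · exact h
      · exfalso
        have l1 := hlt v1 h1
        have l2 := hlt v2 h2
        rw [ha] at l1
        rw [← hb] at l2
        omega
  have : (Finset.univ.erase v0).card = Fintype.card γ - 1 := by
    rw [Finset.card_erase_of_mem (Finset.mem_univ v0), Finset.card_univ]
  have hpos : 0 < Fintype.card γ := Fintype.card_pos_iff.mpr ⟨v0⟩
  omega

/-- Ordered-pair version: a finite connected graph on `k` vertices has at least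
`2 * (k - 1)` ordered adjacent pairs. -/
lemma aux_pairs {γ : Type*} [Fintype γ] (G : SimpleGraph γ) [DecidableRel G.Adj]
    (hc : G.Connected) :
    2 * (Fintype.card γ - 1) ≤ #(Finset.univ.filter fun q : γ × γ => G.Adj q.1 q.2) := by
  classical
  have h2 := G.two_mul_card_edgeFinset
  have h1 := aux_card_le G hc
  have : (Finset.univ.filter fun (x, y) => G.Adj x y)
      = (Finset.univ.filter fun q : γ × γ => G.Adj q.1 q.2) := by
    apply Finset.filter_congr
    rintro ⟨x, y⟩ _
    rfl
  rw [this] at h2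
  omega

lemma two_ne_zero_fin (m' : ℕ) : (2 : Fin (m' + 3)) ≠ 0 := by
  intro h
  have h' := congrArg Fin.val h
  rw [Fin.val_zero] at h'
  rw [show ((2 : Fin (m' + 3)) : ℕ) = 2 % (m' + 3) from rfl,
    Nat.mod_eq_of_lt (by omega)] at h'
  omega

open Fin.CommRing Fin.NatCast in
set_option maxHeartbeats 1600000 in
lemma key_lemma {m n : ℕ} (hm : 3 ≤ m) (hmn : m < n) (hn : n.Prime) {β : Type}
    (H' : SimpleGraph β) :
    ¬ HomMinor (SimpleGraph.cycleGraph m) H' (SimpleGraph.cycleGraph n) := by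
  classical
  obtain ⟨m', rfl⟩ : ∃ m', m = m' + 3 := ⟨m - 3, by omega⟩
  obtain ⟨n', rfl⟩ : ∃ n', n = n' + 2 := ⟨n - 2, by omega⟩
  rintro ⟨hconn, V, hdisj, hiso, hadj⟩
  set G := SimpleGraph.cycleGraph (n' + 2) with hG
  -- uniqueness of the part containing a vertex
  have huniq : ∀ {z : Fin (n' + 2)} {a b : Fin (m' + 3)}, z ∈ V a → z ∈ V b → a = b := by
    intro z a b hza hzb
    by_contra hab
    exact Set.disjoint_left.mp (hdisj a b hab) hza hzb
  -- β is a fintype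
  have : Fintype β := Fintype.ofEquiv _ ((hiso 0).some).toEquiv
  set k := Fintype.card β with hk
  have hk1 : 1 ≤ k := Fintype.card_pos_iff.mpr hconn.nonempty
  -- the parts as finsets
  set A : Fin (m' + 3) → Finset (Fin (n' + 2)) := fun a => (V a).toFinset with hA
  have hmemA : ∀ {z a}, z ∈ A a ↔ z ∈ V a := fun {z a} => Set.mem_toFinset
  have hcardA : ∀ a, #(A a) = k := by
    intro a
    obtain ⟨e⟩ := hiso a
    rw [hA, Set.toFinset_card]
    exact Fintype.card_congr e.toEquiv
  set S : Finset (Fin (n' + 2)) := Finset.univ.biUnion A with hS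
  have hmemS : ∀ {z a}, z ∈ V a → z ∈ S := by
    intro z a hz
    exact Finset.mem_biUnion.mpr ⟨a, Finset.mem_univ a, hmemA.mpr hz⟩
  have hScard : #S = (m' + 3) * k := by
    rw [hS, Finset.card_biUnion]
    · simp [hcardA, Finset.sum_const, Finset.card_univ]
    · intro a _ b _ hab
      dsimp only [Function.onFun]
      rw [Finset.disjoint_left]
      intro z hza hzb
      exact hab (huniq (hmemA.mp hza) (hmemA.mp hzb))
  -- adjacency in the cycle
  have hadjG : ∀ {x y : Fin (n' + 2)}, G.Adj x y → y = x - 1 ∨ y = x + 1 := by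
    intro x y hxy
    rw [hG, SimpleGraph.cycleGraph_adj] at hxy
    rcases hxy with h | h
    · left; rw [← h]; ring_nf
    · right; rw [← h]; ring_nf
  -- the set of adjacent ordered pairs within S
  set T : Finset (Fin (n' + 2) × Fin (n' + 2)) :=
    (S ×ˢ S).filter (fun q => G.Adj q.1 q.2) with hT
  -- lower bound on #T
  -- connecting pairs
  have hedge : ∀ a : Fin (m' + 3), (SimpleGraph.cycleGraph (m' + 3)).Adj a (a + 1) := by
    intro a
    rw [SimpleGraph.cycleGraph_adj]
    right
    ring_nf
  have hEx : ∀ a : Fin (m' + 3), ∃ x ∈ V a, ∃ y ∈ V (a + 1), G.Adj x y :=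
    fun a => hadj a (a + 1) (hedge a)
  choose x hx y hy hxy using hEx
  set C : Finset (Fin (n' + 2) × Fin (n' + 2)) :=
    Finset.univ.biUnion (fun a : Fin (m' + 3) => {(x a, y a), (y a, x a)}) with hC
  set I : Finset (Fin (n' + 2) × Fin (n' + 2)) :=
    Finset.univ.biUnion (fun a : Fin (m' + 3) =>
      (A a ×ˢ A a).filter (fun q => G.Adj q.1 q.2)) with hI
  have hsucc_ne : ∀ a : Fin (m' + 3), a ≠ a + 1 := by
    intro a h
    have : (0 : Fin (m' + 3)) = 1 := by
      have := add_right_cancel (a := a) (b := (0 : Fin (m' + 3))) (c := a)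
      apply add_left_cancel (a := a)
      rw [add_zero, ← h]
    have := congrArg Fin.val this
    simp at this
  -- C has 2*(m'+3) elements
  have hCcard : #C = 2 * (m' + 3) := by
    rw [hC, Finset.card_biUnion]
    · have : ∀ a : Fin (m' + 3),
          #({(x a, y a), (y a, x a)} : Finset (Fin (n' + 2) × Fin (n' + 2))) = 2 := by
        intro a
        rw [Finset.card_pair]
        intro h
        rw [Prod.mk.injEq] at h
        exact hsucc_ne a (huniq (hx a) (h.1 ▸ hy a))
      rw [Finset.sum_congr rfl (fun a _ => this a)]
      simp [Finset.sum_const, Finset.card_univ, mul_comm]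
    · intro a _ b _ hab
      dsimp only [Function.onFun]
      rw [Finset.disjoint_left]
      intro q hqa hqb
      simp only [Finset.mem_insert, Finset.mem_singleton] at hqa hqb
      apply hab
      rcases hqa with rfl | rfl <;> rcases hqb with h | h <;>
        rw [Prod.mk.injEq] at h
      · exact huniq (hx a) (h.1 ▸ hx b)
      · -- (x a, y a) = (y b, x b)
        have e1 : a = b + 1 := huniq (hx a) (h.1 ▸ hy b)
        have e2 : a + 1 = b := huniq (hy a) (h.2 ▸ hx b)
        exfalso
        apply two_ne_zero_fin m'
        have h2 : a + 2 = a + 0 := by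
          rw [add_zero]
          calc a + 2 = (a + 1) + 1 := by ring
            _ = b + 1 := by rw [e2]
            _ = a := e1.symm
        exact add_left_cancel h2
      · -- (y a, x a) = (x b, y b)
        have e1 : a + 1 = b := huniq (hy a) (h.1 ▸ hx b)
        have e2 : a = b + 1 := huniq (hx a) (h.2 ▸ hy b)
        exfalso
        apply two_ne_zero_fin m'
        have h2 : a + 2 = a + 0 := by
          rw [add_zero]
          calc a + 2 = (a + 1) + 1 := by ring
            _ = b + 1 := by rw [e1]
            _ = a := e2.symm
        exact add_left_cancel h2
      · exact huniq (hx a) (h.2 ▸ hx b)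
  -- I has at least 2*(m'+3)*(k-1) elements
  have hIcard : (m' + 3) * (2 * (k - 1)) ≤ #I := by
    rw [hI, Finset.card_biUnion]
    · have hpart : ∀ a : Fin (m' + 3),
          2 * (k - 1) ≤ #((A a ×ˢ A a).filter (fun q => G.Adj q.1 q.2)) := by
        intro a
        obtain ⟨e⟩ := hiso a
        have hGa : (G.induce (V a)).Connected := e.connected_iff.mpr hconn
        have hcardVa : Fintype.card ↥(V a) = k := Fintype.card_congr e.toEquiv
        have h1 := aux_pairs (G.induce (V a)) hGa
        rw [hcardVa] at h1
        refine le_trans h1 ?_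
        refine Finset.card_le_card_of_injOn (fun q => ((q.1 : Fin (n' + 2)), (q.2 : Fin (n' + 2)))) ?_ ?_
        · rintro ⟨u, v⟩ hq
          rw [Finset.mem_coe, Finset.mem_filter] at hq ⊢
          refine ⟨Finset.mem_product.mpr ⟨hmemA.mpr u.2, hmemA.mpr v.2⟩, ?_⟩
          exact hq.2
        · rintro ⟨u1, v1⟩ - ⟨u2, v2⟩ - h
          obtain ⟨h1, h2⟩ := Prod.ext_iff.mp h
          exact Prod.ext (Subtype.ext h1) (Subtype.ext h2)
      calc (m' + 3) * (2 * (k - 1))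
          = ∑ _a : Fin (m' + 3), 2 * (k - 1) := by
            simp [Finset.sum_const, Finset.card_univ]
        _ ≤ ∑ a : Fin (m' + 3), #((A a ×ˢ A a).filter (fun q => G.Adj q.1 q.2)) :=
            Finset.sum_le_sum (fun a _ => hpart a)
    · intro a _ b _ hab
      dsimp only [Function.onFun]
      rw [Finset.disjoint_left]
      intro q hqa hqb
      rw [Finset.mem_filter, Finset.mem_product] at hqa hqb
      exact hab (huniq (hmemA.mp hqa.1.1) (hmemA.mp hqb.1.1))
  -- I and C are disjoint, and both are contained in T
  have hICdisj : Disjoint I C := by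
    rw [Finset.disjoint_left]
    intro q hqI hqC
    rw [hI, Finset.mem_biUnion] at hqI
    obtain ⟨b, -, hqb⟩ := hqI
    rw [Finset.mem_filter, Finset.mem_product] at hqb
    rw [hC, Finset.mem_biUnion] at hqC
    obtain ⟨a, -, hqa⟩ := hqC
    simp only [Finset.mem_insert, Finset.mem_singleton] at hqa
    rcases hqa with rfl | rfl
    · have e1 : a = b := huniq (hx a) (hmemA.mp hqb.1.1)
      have e2 : a + 1 = b := huniq (hy a) (hmemA.mp hqb.1.2)
      exact hsucc_ne a (e1.trans e2.symm)
    · have e1 : a + 1 = b := huniq (hy a) (hmemA.mp hqb.1.1)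
      have e2 : a = b := huniq (hx a) (hmemA.mp hqb.1.2)
      exact hsucc_ne a (e2.trans e1.symm)
  have hIC_sub : I ∪ C ⊆ T := by
    intro q hq
    rw [Finset.mem_union] at hq
    rw [hT, Finset.mem_filter, Finset.mem_product]
    rcases hq with hq | hq
    · rw [hI, Finset.mem_biUnion] at hq
      obtain ⟨a, -, hqa⟩ := hq
      rw [Finset.mem_filter, Finset.mem_product] at hqa
      exact ⟨⟨hmemS (hmemA.mp hqa.1.1), hmemS (hmemA.mp hqa.1.2)⟩, hqa.2⟩
    · rw [hC, Finset.mem_biUnion] at hq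
      obtain ⟨a, -, hqa⟩ := hq
      simp only [Finset.mem_insert, Finset.mem_singleton] at hqa
      rcases hqa with rfl | rfl
      · exact ⟨⟨hmemS (hx a), hmemS (hy a)⟩, hxy a⟩
      · exact ⟨⟨hmemS (hy a), hmemS (hx a)⟩, (hxy a).symm⟩
  have hTlower : 2 * ((m' + 3) * k) ≤ #T := by
    have := Finset.card_le_card hIC_sub
    rw [Finset.card_union_of_disjoint hICdisj] at this
    have hcalc : (m' + 3) * (2 * (k - 1)) + 2 * (m' + 3) = 2 * ((m' + 3) * k) := by
      have : k - 1 + 1 = k := Nat.succ_pred_eq_of_pos hk1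
      nlinarith [this]
    omega
  -- S is closed under adding and subtracting 1
  have hclosed : ∀ z ∈ S, (z + 1) ∈ S ∧ (z - 1) ∈ S := by
    by_contra hcon
    push_neg at hcon
    obtain ⟨z0, hz0, hz0bad⟩ := hcon
    -- fiber bound
    have hfiber : ∀ w ∈ S, #(S.filter (fun y => G.Adj w y)) ≤ 2 := by
      intro w _
      have hsub : S.filter (fun y => G.Adj w y) ⊆ {w - 1, w + 1} := by
        intro y hy
        rw [Finset.mem_filter] at hy
        rcases hadjG hy.2 with h | h
        · exact Finset.mem_insert.mpr (Or.inl h)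
        · exact Finset.mem_insert.mpr (Or.inr (Finset.mem_singleton.mpr h))
      calc #(S.filter (fun y => G.Adj w y)) ≤ #({w - 1, w + 1} : Finset _) :=
            Finset.card_le_card hsub
        _ ≤ 2 := (Finset.card_insert_le _ _).trans (by simp)
    have hbadcases : (z0 + 1) ∉ S ∨ (z0 - 1) ∉ S := by tauto
    have hfiber0 : #(S.filter (fun y => G.Adj z0 y)) ≤ 1 := by
      rcases hbadcases with hbad | hbad
      · -- z0 + 1 ∉ S : fiber ⊆ {z0 - 1}
        refine le_trans (Finset.card_le_card ?_) (by simp : #({z0 - 1} : Finset _) ≤ 1)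
        intro y hy
        rw [Finset.mem_filter] at hy
        rcases hadjG hy.2 with h | h
        · exact Finset.mem_singleton.mpr h
        · exact absurd (h ▸ hy.1) hbad
      · refine le_trans (Finset.card_le_card ?_) (by simp : #({z0 + 1} : Finset _) ≤ 1)
        intro y hy
        rw [Finset.mem_filter] at hy
        rcases hadjG hy.2 with h | h
        · exact absurd (h ▸ hy.1) hbad
        · exact Finset.mem_singleton.mpr h
    -- T is contained in the biUnion of fibers
    have hTsub : T ⊆ S.biUnion (fun w => {w} ×ˢ (S.filter (fun y => G.Adj w y))) := by
      rintro ⟨w, y⟩ hq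
      rw [hT, Finset.mem_filter, Finset.mem_product] at hq
      rw [Finset.mem_biUnion]
      exact ⟨w, hq.1.1, Finset.mem_product.mpr ⟨Finset.mem_singleton_self w,
        Finset.mem_filter.mpr ⟨hq.1.2, hq.2⟩⟩⟩
    have hTupper : #T < 2 * #S := by
      calc #T ≤ ∑ w ∈ S, #({w} ×ˢ (S.filter (fun y => G.Adj w y))) :=
            le_trans (Finset.card_le_card hTsub) (Finset.card_biUnion_le)
        _ = ∑ w ∈ S, #(S.filter (fun y => G.Adj w y)) := by
            apply Finset.sum_congr rfl
            intro w _
            rw [Finset.card_product, Finset.card_singleton, one_mul]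
        _ < ∑ w ∈ S, 2 := by
            refine Finset.sum_lt_sum (fun w hw => hfiber w hw) ⟨z0, hz0, by omega⟩
        _ = 2 * #S := by rw [Finset.sum_const, smul_eq_mul, mul_comm]
    rw [hScard] at hTupper
    omega
  -- hence S = univ
  have hSuniv : S = Finset.univ := by
    have hz0 : x 0 ∈ S := hmemS (hx 0)
    have hstep : ∀ c : ℕ, (x 0 + (c : Fin (n' + 2))) ∈ S := by
      intro c
      induction c with
      | zero => simpa using hz0
      | succ c ih =>
          have : ((c + 1 : ℕ) : Fin (n' + 2)) = (c : Fin (n' + 2)) + 1 := by push_cast; ring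
          rw [this, ← add_assoc]
          exact (hclosed _ ih).1
    apply Finset.eq_univ_of_forall
    intro z
    have := hstep ((z - x 0).val)
    rwa [Fin.cast_val_eq_self, add_sub_cancel] at this
  have hfinal : (m' + 3) * k = n' + 2 := by
    rw [← hScard, hSuniv, Finset.card_univ, Fintype.card_fin]
  -- contradiction with primality
  have hdvd : (m' + 3) ∣ (n' + 2) := ⟨k, hfinal.symm⟩
  rcases (Nat.Prime.eq_one_or_self_of_dvd hn _ hdvd) with h | h
  · omega
  · omega

/-- The cycles of odd prime lengths form an infinite antichain for the homogeneous minor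
relation, so `≼₁` is not a well-quasi-order on finite graphs. -/
theorem stmt_11 (p : ℕ → ℕ) (hmono : StrictMono p)
    (hprime : ∀ i, (p i).Prime) (hodd : ∀ i, Odd (p i)) :
    ∀ i j : ℕ, i < j →
      ∀ {β : Type} (H' : SimpleGraph β),
        ¬ HomMinor (SimpleGraph.cycleGraph (p i)) H' (SimpleGraph.cycleGraph (p j)) := by
  intro i j hij β H'
  have h2 : 2 ≤ p i := (hprime i).two_le
  have h3 : 3 ≤ p i := by
    rcases Nat.lt_or_ge (p i) 3 with h | h
    · exfalso
      interval_cases h' : p i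
      · exact ((by decide : ¬ Odd 2)) (h' ▸ hodd i)
    · exact h
  exact key_lemma h3 (hmono hij) (hprime j) H'
end

section
/- Let X be a finite connected vertex-transitive graph of valency k ≥ 1. Then the vertex connectivity of X is at least (2/3)(k+1); equivalently, removing fewer than ⌈(2/3)(k+1)⌉ vertices from X leaves a connected graph (unless the remainder has at most one vertex). -/
open Finset

namespace Stmt12Aux

variable {α : Type*} [Fintype α] [DecidableEq α] (X : SimpleGraph α) [DecidableRel X.Adj]

/-- External vertex boundary of a finset of vertices. -/
def nbhdF (A : Finset α) : Finset α :=
  Finset.univ.filter fun v => v ∉ A ∧ ∃ a ∈ A, X.Adj a v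

/-- Exterior: vertices neither in `A` nor adjacent to `A`. -/
def extF (A : Finset α) : Finset α := (A ∪ nbhdF X A)ᶜ

lemma mem_nbhdF {A : Finset α} {v : α} :
    v ∈ nbhdF X A ↔ v ∉ A ∧ ∃ a ∈ A, X.Adj a v := by
  simp [nbhdF]

lemma mem_extF {A : Finset α} {v : α} :
    v ∈ extF X A ↔ v ∉ A ∧ ∀ a ∈ A, ¬ X.Adj a v := by
  simp only [extF, Finset.mem_compl, Finset.mem_union, mem_nbhdF]
  push_neg
  tauto

lemma mem_tri (A : Finset α) (v : α) :
    v ∈ A ∨ v ∈ nbhdF X A ∨ v ∈ extF X A := by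
  by_cases h1 : v ∈ A
  · exact Or.inl h1
  by_cases h2 : v ∈ nbhdF X A
  · exact Or.inr (Or.inl h2)
  refine Or.inr (Or.inr ((mem_extF X).2 ⟨h1, ?_⟩))
  intro a ha hadj
  exact h2 ((mem_nbhdF X).2 ⟨h1, a, ha, hadj⟩)

def Small (A : Finset α) : Prop := A.Nonempty ∧ (extF X A).Nonempty

noncomputable def kap : ℕ := sInf {n | ∃ A : Finset α, Small X A ∧ (nbhdF X A).card = n}

def Frag (A : Finset α) : Prop := Small X A ∧ (nbhdF X A).card = kap X

noncomputable def atomSize : ℕ := sInf {n | ∃ A : Finset α, Frag X A ∧ A.card = n}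

def Atom (A : Finset α) : Prop := Frag X A ∧ A.card = atomSize X

lemma kap_le {A : Finset α} (h : Small X A) : kap X ≤ (nbhdF X A).card :=
  Nat.sInf_le ⟨A, h, rfl⟩

lemma frag_exists (h : ∃ A, Small X A) : ∃ A, Frag X A := by
  obtain ⟨A, hA⟩ := h
  obtain ⟨B, hB, hBc⟩ := Nat.sInf_mem (⟨_, A, hA, rfl⟩ :
    {n | ∃ A : Finset α, Small X A ∧ (nbhdF X A).card = n}.Nonempty)
  exact ⟨B, hB, hBc⟩

lemma atom_exists (h : ∃ A, Frag X A) : ∃ A, Atom X A := by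
  obtain ⟨A, hA⟩ := h
  obtain ⟨B, hB, hBc⟩ := Nat.sInf_mem (⟨_, A, hA, rfl⟩ :
    {n | ∃ A : Finset α, Frag X A ∧ A.card = n}.Nonempty)
  exact ⟨B, hB, hBc⟩

lemma atomSize_le {A : Finset α} (h : Frag X A) : atomSize X ≤ A.card :=
  Nat.sInf_le ⟨A, h, rfl⟩

lemma nbhdF_extF_subset (A : Finset α) : nbhdF X (extF X A) ⊆ nbhdF X A := by
  intro v hv
  rw [mem_nbhdF] at hv
  obtain ⟨hv1, b, hb, hadj⟩ := hv
  have hb' := (mem_extF X).1 hb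
  rcases mem_tri X A v with h | h | h
  · exact absurd (X.adj_symm hadj) (hb'.2 v h)
  · exact h
  · exact absurd h hv1

lemma subset_extF_extF (A : Finset α) : A ⊆ extF X (extF X A) := by
  intro v hv
  rw [mem_extF]
  constructor
  · intro hc
    exact ((mem_extF X).1 hc).1 hv
  · intro b hb hadj
    exact ((mem_extF X).1 hb).2 v hv (X.adj_symm hadj)

lemma extF_anti {A B : Finset α} (h : A ⊆ B) : extF X B ⊆ extF X A := by
  intro v hv
  rw [mem_extF] at hv ⊢
  exact ⟨fun hvA => hv.1 (h hvA), fun a ha hadj => hv.2 a (h ha) hadj⟩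

lemma small_extF {A : Finset α} (h : Small X A) : Small X (extF X A) :=
  ⟨h.2, h.1.mono (subset_extF_extF X A)⟩

lemma frag_extF {A : Finset α} (h : Frag X A) :
    Frag X (extF X A) ∧ nbhdF X (extF X A) = nbhdF X A := by
  have hsub := nbhdF_extF_subset X A
  have hsm := small_extF X h.1
  have h1 : kap X ≤ (nbhdF X (extF X A)).card := kap_le X hsm
  have h2 : (nbhdF X (extF X A)).card ≤ (nbhdF X A).card := card_le_card hsub
  have h3 := h.2
  refine ⟨⟨hsm, by omega⟩, Finset.eq_of_subset_of_card_le hsub (by omega)⟩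

lemma degree_bound {k : ℕ} (hreg : ∀ v, X.degree v = k) {A : Finset α}
    (h : A.Nonempty) : k + 1 ≤ A.card + (nbhdF X A).card := by
  obtain ⟨v, hv⟩ := h
  have hsub : X.neighborFinset v ⊆ A.erase v ∪ nbhdF X A := by
    intro u hu
    rw [SimpleGraph.mem_neighborFinset] at hu
    by_cases huA : u ∈ A
    · refine mem_union_left _ (Finset.mem_erase.2 ⟨?_, huA⟩)
      rintro rfl
      exact X.loopless.irrefl _ hu
    · exact mem_union_right _ ((mem_nbhdF X).2 ⟨huA, v, hv, hu⟩)
  have h1 := card_le_card hsub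
  have h2 : (X.neighborFinset v).card = k := hreg v
  have h3 : (A.erase v ∪ nbhdF X A).card ≤ (A.card - 1) + (nbhdF X A).card := by
    refine le_trans (card_union_le _ _) ?_
    rw [Finset.card_erase_of_mem hv]
  have h4 : 1 ≤ A.card := card_pos.2 ⟨v, hv⟩
  omega

lemma submod (A B : Finset α) :
    (nbhdF X (A ∩ B)).card + (nbhdF X (A ∪ B)).card
      ≤ (nbhdF X A).card + (nbhdF X B).card := by
  have h1 : nbhdF X (A ∩ B) ∪ nbhdF X (A ∪ B) ⊆ nbhdF X A ∪ nbhdF X B := by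
    intro v hv
    rw [mem_union, mem_nbhdF, mem_nbhdF] at hv
    rw [mem_union, mem_nbhdF, mem_nbhdF]
    rcases hv with ⟨hv1, a, ha, hadj⟩ | ⟨hv1, a, ha, hadj⟩
    · rw [mem_inter] at ha
      by_cases hvA : v ∈ A
      · exact Or.inr ⟨fun hvB => hv1 (mem_inter.2 ⟨hvA, hvB⟩), a, ha.2, hadj⟩
      · exact Or.inl ⟨hvA, a, ha.1, hadj⟩
    · rw [mem_union] at ha
      rcases ha with ha | ha
      · exact Or.inl ⟨fun h => hv1 (mem_union_left _ h), a, ha, hadj⟩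
      · exact Or.inr ⟨fun h => hv1 (mem_union_right _ h), a, ha, hadj⟩
  have h2 : nbhdF X (A ∩ B) ∩ nbhdF X (A ∪ B) ⊆ nbhdF X A ∩ nbhdF X B := by
    intro v hv
    rw [mem_inter, mem_nbhdF, mem_nbhdF] at hv
    obtain ⟨⟨_, a, ha, hadj⟩, ⟨hv2, _⟩⟩ := hv
    rw [mem_inter] at ha
    rw [mem_inter, mem_nbhdF, mem_nbhdF]
    exact ⟨⟨fun h => hv2 (mem_union_left _ h), a, ha.1, hadj⟩,
      ⟨fun h => hv2 (mem_union_right _ h), a, ha.2, hadj⟩⟩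
  have e1 := Finset.card_union_add_card_inter (nbhdF X (A ∩ B)) (nbhdF X (A ∪ B))
  have e2 := Finset.card_union_add_card_inter (nbhdF X A) (nbhdF X B)
  have c1 := card_le_card h1
  have c2 := card_le_card h2
  omega

lemma nbhdF_nonempty (hconn : X.Connected) {A : Finset α} (h : Small X A) :
    (nbhdF X A).Nonempty := by
  by_contra hne
  rw [Finset.not_nonempty_iff_eq_empty] at hne
  obtain ⟨⟨x, hx⟩, ⟨y, hy⟩⟩ := h
  have key : ∀ {u v : α}, X.Walk u v → u ∈ A → v ∈ A := by
    intro u v w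
    induction w with
    | nil => exact id
    | @cons u b v hadj p ih =>
      intro hu
      apply ih
      by_contra hb
      have : b ∈ nbhdF X A := (mem_nbhdF X).2 ⟨hb, u, hu, hadj⟩
      rw [hne] at this
      exact absurd this (Finset.notMem_empty b)
  obtain ⟨w⟩ := hconn.preconnected x y
  exact ((mem_extF X).1 hy).1 (key w hx)

lemma nbhdF_image (φ : X ≃g X) (A : Finset α) :
    nbhdF X (A.image φ) = (nbhdF X A).image φ := by
  ext v
  obtain ⟨w, rfl⟩ := φ.surjective v
  rw [mem_nbhdF]
  constructor
  · rintro ⟨h1, a, ha, hadj⟩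
    obtain ⟨b, hb, rfl⟩ := Finset.mem_image.1 ha
    refine Finset.mem_image.2 ⟨w, (mem_nbhdF X).2 ⟨?_, b, hb, φ.map_adj_iff.1 hadj⟩, rfl⟩
    intro hw
    exact h1 (Finset.mem_image_of_mem _ hw)
  · intro h
    obtain ⟨u, hu, he⟩ := Finset.mem_image.1 h
    have huw : u = w := φ.injective he
    subst huw
    obtain ⟨hu1, a, ha, hadj⟩ := (mem_nbhdF X).1 hu
    refine ⟨?_, φ a, Finset.mem_image_of_mem _ ha, φ.map_adj_iff.2 hadj⟩
    intro hc
    obtain ⟨b, hb, hbe⟩ := Finset.mem_image.1 hc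
    have hbw : b = u := φ.injective hbe
    subst hbw
    exact hu1 hb

lemma image_compl_bij {f : α → α} (hinj : Function.Injective f)
    (hsurj : Function.Surjective f) (s : Finset α) :
    (s.image f)ᶜ = sᶜ.image f := by
  ext v
  obtain ⟨w, rfl⟩ := hsurj v
  simp only [Finset.mem_compl, Finset.mem_image]
  constructor
  · intro h
    exact ⟨w, fun hw => h ⟨w, hw, rfl⟩, rfl⟩
  · rintro ⟨b, hb, hbe⟩ ⟨a, ha, hae⟩
    have hbw : b = w := hinj hbe
    have haw : a = w := hinj hae
    subst hbw; subst haw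
    exact hb ha

lemma extF_image (φ : X ≃g X) (A : Finset α) :
    extF X (A.image φ) = (extF X A).image φ := by
  rw [extF, extF, nbhdF_image, ← Finset.image_union]
  exact image_compl_bij φ.injective φ.surjective _

lemma atom_image (φ : X ≃g X) {A : Finset α} (h : Atom X A) : Atom X (A.image φ) := by
  obtain ⟨⟨⟨hne, hext⟩, hcard⟩, hsize⟩ := h
  have hci : ∀ B : Finset α, (B.image φ).card = B.card := fun B =>
    Finset.card_image_of_injective _ φ.injective
  refine ⟨⟨⟨hne.image φ, ?_⟩, ?_⟩, ?_⟩
  · rw [extF_image]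
    exact hext.image φ
  · rw [nbhdF_image, hci, hcard]
  · rw [hci, hsize]

lemma atom_subset_frag {A B : Finset α} (hA : Atom X A) (hB : Frag X B)
    (hAB : (A ∩ B).Nonempty) : A ⊆ B := by
  by_contra hsub
  have hABss : A ∩ B ⊂ A := by
    refine (Finset.ssubset_iff_subset_ne).2 ⟨inter_subset_left, fun h => hsub ?_⟩
    intro x hx
    exact (mem_inter.1 (h ▸ hx)).2
  have hABlt : (A ∩ B).card < A.card := card_lt_card hABss
  have hsmallAB : Small X (A ∩ B) :=
    ⟨hAB, hB.1.2.mono (extF_anti X inter_subset_right)⟩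
  have h1 : kap X + 1 ≤ (nbhdF X (A ∩ B)).card := by
    have hk := kap_le X hsmallAB
    rcases eq_or_lt_of_le hk with he | hl
    · exfalso
      have hfrag : Frag X (A ∩ B) := ⟨hsmallAB, he.symm⟩
      have h5 := atomSize_le X hfrag
      have h6 := hA.2
      omega
    · omega
  have hsm := submod X A B
  rw [hA.1.2, hB.2] at hsm
  rcases (extF X (A ∪ B)).eq_empty_or_nonempty with hext | hext
  · have huniv : A ∪ B ∪ nbhdF X (A ∪ B) = Finset.univ := by
      have : ((A ∪ B) ∪ nbhdF X (A ∪ B))ᶜ = ∅ := hext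
      rwa [Finset.compl_eq_empty_iff] at this
    have c1 : Fintype.card α ≤ (A ∪ B).card + (nbhdF X (A ∪ B)).card := by
      calc Fintype.card α = (A ∪ B ∪ nbhdF X (A ∪ B)).card := by
            rw [huniv, Finset.card_univ]
        _ ≤ (A ∪ B).card + (nbhdF X (A ∪ B)).card := card_union_le _ _
    have c2 : (A ∪ B).card + (A ∩ B).card = A.card + B.card :=
      Finset.card_union_add_card_inter _ _
    have c3 : B.card + kap X + (extF X B).card ≤ Fintype.card α := by
      have hd1 : Disjoint B (nbhdF X B) := by
        rw [Finset.disjoint_left]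
        intro x hx hx'
        exact ((mem_nbhdF X).1 hx').1 hx
      have hd : (B ∪ nbhdF X B).card = B.card + (nbhdF X B).card :=
        card_union_of_disjoint hd1
      have := Finset.card_add_card_compl (B ∪ nbhdF X B)
      rw [hd] at this
      have hle : (extF X B).card = ((B ∪ nbhdF X B)ᶜ).card := rfl
      rw [hB.2] at this
      omega
    have c4 : atomSize X ≤ (extF X B).card := atomSize_le X (frag_extF X hB).1
    have c5 : 1 ≤ (A ∩ B).card := card_pos.2 hAB
    have c6 : A.card = atomSize X := hA.2
    omega
  · have hsmU : Small X (A ∪ B) :=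
      ⟨hA.1.1.1.mono subset_union_left, hext⟩
    have := kap_le X hsmU
    omega

lemma kap_ge (hconn : X.Connected) {k : ℕ} (hreg : ∀ v, X.degree v = k)
    (hvt : ∀ x y : α, ∃ φ : X ≃g X, φ x = y)
    (hex : ∃ A, Small X A) : 2 * (k + 1) ≤ 3 * kap X := by
  by_contra hlt
  push_neg at hlt
  obtain ⟨A0, hA0⟩ := atom_exists X (frag_exists X hex)
  have hκpos : 1 ≤ kap X := by
    have h := card_pos.2 (nbhdF_nonempty X hconn hA0.1.1)
    rw [hA0.1.2] at h
    exact h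
  have hdeg := degree_bound X hreg hA0.1.1.1
  rw [hA0.2, hA0.1.2] at hdeg
  have h2a : kap X + 1 ≤ 2 * atomSize X := by omega
  obtain ⟨c, hc⟩ := nbhdF_nonempty X hconn hA0.1.1
  obtain ⟨a0, ha0⟩ := hA0.1.1.1
  obtain ⟨φ, hφ⟩ := hvt a0 c
  set A' := A0.image φ with hA'def
  have hA' : Atom X A' := atom_image X φ hA0
  have hcA' : c ∈ A' := Finset.mem_image.2 ⟨a0, ha0, hφ⟩
  set E := extF X A0 with hEdef
  have hEfrag : Frag X E := (frag_extF X hA0.1).1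
  have hEnbhd : nbhdF X E = nbhdF X A0 := (frag_extF X hA0.1).2
  have hA'C : A' ⊆ nbhdF X A0 := by
    intro z hz
    rcases mem_tri X A0 z with h | h | h
    · exfalso
      have hsub := atom_subset_frag X hA' hA0.1 ⟨z, mem_inter.2 ⟨hz, h⟩⟩
      have heq : A' = A0 :=
        Finset.eq_of_subset_of_card_le hsub (by rw [hA'.2, hA0.2])
      rw [heq] at hcA'
      exact ((mem_nbhdF X).1 hc).1 hcA'
    · exact h
    · exfalso
      have hsub := atom_subset_frag X hA' hEfrag ⟨z, mem_inter.2 ⟨hz, h⟩⟩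
      have hcE : c ∈ E := hsub hcA'
      obtain ⟨_, a, ha, hadj⟩ := (mem_nbhdF X).1 hc
      exact ((mem_extF X).1 hcE).2 a ha hadj
  set D := nbhdF X A' with hDdef
  have hDcard : D.card = kap X := hA'.1.2
  have hA'card : A'.card = atomSize X := hA'.2
  have hκa : atomSize X ≤ kap X := by
    have := card_le_card hA'C
    rw [hA'card, hA0.1.2] at this
    exact this
  have claim : ∀ W : Finset α, Frag X W → nbhdF X W = nbhdF X A0 →
      atomSize X ≤ (D ∩ W).card := by
    intro W hW hWnb
    have hWA' : ∀ b ∈ W, b ∉ A' := by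
      intro b hb hbA'
      have : b ∈ nbhdF X W := hWnb ▸ hA'C hbA'
      exact ((mem_nbhdF X).1 this).1 hb
    rcases (W \ D).eq_empty_or_nonempty with hF | hF
    · have hsubWD : W ⊆ D := sdiff_eq_empty_iff_subset.1 hF
      have : D ∩ W = W := inter_eq_right.2 hsubWD
      rw [this]
      exact atomSize_le X hW
    · have hsmF : Small X (W \ D) :=
        ⟨hF, hW.1.2.mono (extF_anti X sdiff_subset)⟩
      have hnbF : nbhdF X (W \ D) ⊆ (D ∩ W) ∪ (nbhdF X A0 \ A') := by
        intro v hv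
        rw [mem_nbhdF] at hv
        obtain ⟨hv1, b, hb, hadj⟩ := hv
        have hbW : b ∈ W := (mem_sdiff.1 hb).1
        have hbD : b ∉ D := (mem_sdiff.1 hb).2
        by_cases hvW : v ∈ W
        · refine mem_union_left _ (mem_inter.2 ⟨?_, hvW⟩)
          by_contra hvD
          exact hv1 (mem_sdiff.2 ⟨hvW, hvD⟩)
        · refine mem_union_right _ (mem_sdiff.2 ⟨?_, ?_⟩)
          · rw [← hWnb, mem_nbhdF]
            exact ⟨hvW, b, hbW, hadj⟩
          · intro hvA'
            exact hbD ((mem_nbhdF X).2 ⟨hWA' b hbW, v, hvA', X.adj_symm hadj⟩)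
      have hκle := kap_le X hsmF
      have hcardle := card_le_card hnbF
      have hun := card_union_le (D ∩ W) (nbhdF X A0 \ A')
      have hsd : (nbhdF X A0 \ A').card = kap X - atomSize X := by
        rw [card_sdiff_of_subset hA'C, hA0.1.2, hA'card]
      omega
  have c1 := claim A0 hA0.1 rfl
  have c2 := claim E hEfrag hEnbhd
  have hdisj : Disjoint (D ∩ A0) (D ∩ E) := by
    rw [Finset.disjoint_left]
    intro x hx hx'
    exact ((mem_extF X).1 (mem_inter.1 hx').2).1 (mem_inter.1 hx).2
  have hsum : (D ∩ A0).card + (D ∩ E).card ≤ D.card := by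
    rw [← card_union_of_disjoint hdisj]
    exact card_le_card (union_subset inter_subset_left inter_subset_left)
  omega

end Stmt12Aux


open Stmt12Aux

/-- At least `(2/3)(k+1)` vertices must be removed from a finite connected vertex-transitive
graph of valency `k ≥ 1` to disconnect it: removing any set `S` with `3·|S| < 2·(k+1)` leaves
a graph that is connected (unless it has at most one vertex). -/
theorem stmt_12 {α : Type*} [Fintype α] [DecidableEq α] (X : SimpleGraph α)
    [DecidableRel X.Adj] (k : ℕ) (hk : 1 ≤ k)
    (hreg : ∀ v, X.degree v = k)
    (hconn : X.Connected)
    (hvt : ∀ x y : α, ∃ φ : X ≃g X, φ x = y) :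
    ∀ S : Finset α, 3 * S.card < 2 * (k + 1) →
      (X.induce (↑S : Set α)ᶜ).Connected ∨ Fintype.card ((↑S : Set α)ᶜ : Set α) ≤ 1 := by
  classical
  intro S hS
  by_contra hcon
  push_neg at hcon
  set T : Set α := (↑S : Set α)ᶜ with hT
  obtain ⟨hnc, hcard⟩ := hcon
  haveI hne : Nonempty T := by
    have h0 : 0 < Fintype.card ((↑S : Set α)ᶜ : Set α) := by omega
    rw [Fintype.card_pos_iff] at h0
    exact h0
  have hpre : ¬ (X.induce T).Preconnected := fun h => hnc ⟨h⟩
  rw [SimpleGraph.Preconnected] at hpre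
  push_neg at hpre
  obtain ⟨x, y, hxy⟩ := hpre
  set A : Finset α :=
    Finset.univ.filter (fun v => ∃ h : v ∈ T, (X.induce T).Reachable x ⟨v, h⟩) with hAdef
  have hxmem : (x : α) ∈ A := by
    rw [hAdef, Finset.mem_filter]
    exact ⟨Finset.mem_univ _, x.2, SimpleGraph.Reachable.refl _⟩
  have hnb : nbhdF X A ⊆ S := by
    intro v hv
    rw [mem_nbhdF] at hv
    obtain ⟨hv1, a, ha, hadj⟩ := hv
    by_contra hvS
    have hvT : v ∈ T := by
      rw [hT]
      simpa using hvS
    rw [hAdef, Finset.mem_filter] at ha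
    obtain ⟨-, haT, hreach⟩ := ha
    refine hv1 ?_
    rw [hAdef, Finset.mem_filter]
    refine ⟨Finset.mem_univ _, hvT, hreach.trans (SimpleGraph.Adj.reachable ?_)⟩
    exact hadj
  have hymem : (y : α) ∈ extF X A := by
    rw [mem_extF]
    constructor
    · intro hy
      rw [hAdef, Finset.mem_filter] at hy
      obtain ⟨-, hyT, hreach⟩ := hy
      exact hxy hreach
    · intro a ha hadj
      rw [hAdef, Finset.mem_filter] at ha
      obtain ⟨-, haT, hreach⟩ := ha
      refine hxy (hreach.trans (SimpleGraph.Adj.reachable ?_))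
      exact hadj
  have hsmall : Small X A := ⟨⟨x, hxmem⟩, ⟨y, hymem⟩⟩
  have hkS : kap X ≤ S.card := le_trans (kap_le X hsmall) (Finset.card_le_card hnb)
  have hmain := kap_ge X hconn hreg hvt ⟨A, hsmall⟩
  omega
end

section
/- Let X be a finite connected vertex-transitive graph with valency d ≥ 2, and suppose V(X) is partitioned into sets {V_x} each of size at least 2, with each induced subgraph X[V_x] isomorphic to a fixed graph X''. Fix one part V and let u ∈ V be a vertex incident with an edge leaving V. Then there exists a vertex v ∈ V with v ≠ u such that v has degree strictly less than d in the induced subgraph X[V]. (Consequently at least two vertices of V have degree < d inside V.) -/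
/-- In a finite connected graph, a vertex at maximal distance from `r` is avoidable on
walks from `r` to any other vertex. -/
lemma aux_avoid {α : Type*} [DecidableEq α] (X : SimpleGraph α) (hconn : X.Connected) (r p : α)
    (hp : ∀ y, X.dist r y ≤ X.dist r p) {y : α} (hy : y ≠ p) :
    ∃ q : X.Walk r y, p ∉ q.support := by
  obtain ⟨q, hq⟩ := hconn.exists_walk_length_eq_dist r y
  refine ⟨q, fun hmem => ?_⟩
  have hspec := q.take_spec hmem
  have h1 : X.dist r p ≤ (q.takeUntil p hmem).length := X.dist_le _
  have h2 : 1 ≤ (q.dropUntil p hmem).length := by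
    rcases Nat.eq_zero_or_pos (q.dropUntil p hmem).length with h | h
    · exact absurd (SimpleGraph.Walk.eq_of_length_eq_zero h) (Ne.symm hy).elim
    · exact h
  have hlen : ((q.takeUntil p hmem).append (q.dropUntil p hmem)).length = q.length := by
    rw [hspec]
  rw [SimpleGraph.Walk.length_append] at hlen
  have : X.dist r p + 1 ≤ q.length := by omega
  rw [hq] at this
  have := hp y
  omega

/-- If all neighbours of vertices in `S \ {u}` stay in `S`, then a walk starting in
`S \ {u}` and avoiding `u` stays in `S`. -/
lemma aux_stay {α : Type*} (X : SimpleGraph α) (S : Set α) (u : α)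
    (hnbr : ∀ v ∈ S, v ≠ u → X.neighborSet v ⊆ S) :
    ∀ {x y : α} (q : X.Walk x y), u ∉ q.support → x ∈ S → x ≠ u → y ∈ S := by
  intro x y q
  induction q with
  | nil => intro _ hx _; exact hx
  | cons h q ih =>
      intro hsup hx hxu
      rw [SimpleGraph.Walk.support_cons] at hsup
      have hsup' : u ∉ q.support := fun hh => hsup (List.mem_cons_of_mem _ hh)
      have hx' : _ ∈ S := hnbr _ hx hxu h
      have hx'u : _ ≠ u := fun hh => hsup' (hh ▸ q.start_mem_support)
      exact ih hsup' hx' hx'u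

/-- In a finite connected vertex-transitive graph `X` of valency `d ≥ 2` whose vertex set is
partitioned into parts of size `≥ 2` all inducing copies of a fixed graph `X''`, every part `V`
containing a vertex `u` incident with an edge leaving `V` also contains a second vertex `v ≠ u`
of degree `< d` in the induced subgraph `X[V]`. -/
theorem stmt_13 {α β : Type*} [Fintype α] [DecidableEq α] (X : SimpleGraph α)
    [DecidableRel X.Adj] (d : ℕ) (hd : 2 ≤ d)
    (hreg : ∀ v, X.degree v = d)
    (hconn : X.Connected)
    (hvt : ∀ x y : α, ∃ φ : X ≃g X, φ x = y)
    (ι : Type*) (V : ι → Set α)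
    (hdisj : ∀ a b, a ≠ b → Disjoint (V a) (V b))
    (hcover : (⋃ a, V a) = Set.univ)
    (hsize : ∀ a, 2 ≤ (V a).ncard)
    (X'' : SimpleGraph β)
    (hiso : ∀ a, Nonempty (X.induce (V a) ≃g X''))
    (a : ι) (u : α) (hu : u ∈ V a)
    (hleave : ∃ w, w ∉ V a ∧ X.Adj u w) :
    ∃ v ∈ V a, v ≠ u ∧ {w | w ∈ V a ∧ X.Adj v w}.ncard < d := by
  obtain ⟨w, hwA, hadj⟩ := hleave
  by_contra hcon
  push_neg at hcon
  -- every vertex of V a other than u has all its neighbours inside V a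
  have hnbr : ∀ v ∈ V a, v ≠ u → X.neighborSet v ⊆ V a := by
    intro v hv hvu
    have hle := hcon v hv hvu
    have hsub : {w | w ∈ V a ∧ X.Adj v w} ⊆ X.neighborSet v := fun x hx => hx.2
    have hcardN : (X.neighborSet v).ncard = d := by
      rw [Set.ncard_eq_toFinset_card']
      simpa [SimpleGraph.neighborFinset, SimpleGraph.degree] using hreg v
    have heq : {w | w ∈ V a ∧ X.Adj v w} = X.neighborSet v :=
      Set.eq_of_subset_of_ncard_le hsub (by rw [hcardN]; exact hle) (Set.toFinite _)
    intro x hx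
    have : x ∈ {w | w ∈ V a ∧ X.Adj v w} := heq ▸ hx
    exact this.1
  -- pick a second vertex s ∈ V a, s ≠ u
  obtain ⟨s, hs, hsu⟩ := Set.exists_ne_of_one_lt_ncard (s := V a) (by have := hsize a; omega) u
  have hwu : w ≠ u := fun h => hwA (h ▸ hu)
  -- a vertex at maximal distance from some root can be avoided
  have : Nonempty α := ⟨u⟩
  obtain ⟨p, hp⟩ := Finite.exists_max (fun y => X.dist u y)
  -- transport to u via vertex-transitivity
  obtain ⟨φ, hφ⟩ := hvt p u
  -- build a walk from s to w avoiding u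
  have hs' : φ.symm s ≠ p := by
    intro h
    apply hsu
    have := congrArg φ h
    simpa [hφ] using this
  have hw' : φ.symm w ≠ p := by
    intro h
    apply hwu
    have := congrArg φ h
    simpa [hφ] using this
  obtain ⟨q1, hq1⟩ := aux_avoid X hconn u p hp hs'
  obtain ⟨q2, hq2⟩ := aux_avoid X hconn u p hp hw'
  set q : X.Walk (φ.symm s) (φ.symm w) := q1.reverse.append q2 with hq
  have hqp : p ∉ q.support := by
    rw [hq, SimpleGraph.Walk.mem_support_append_iff, SimpleGraph.Walk.support_reverse]
    rintro (h | h)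
    · exact hq1 (List.mem_reverse.mp h)
    · exact hq2 h
  -- map the walk through φ
  let q' : X.Walk (φ (φ.symm s)) (φ (φ.symm w)) := q.map φ.toHom
  have hq'u : u ∉ q'.support := by
    intro h
    rw [SimpleGraph.Walk.support_map, List.mem_map] at h
    obtain ⟨x, hx, hxe⟩ := h
    have : x = p := φ.injective (by simpa [hφ] using hxe)
    exact hqp (this ▸ hx)
  have hss : φ (φ.symm s) = s := φ.apply_symm_apply s
  have hww : φ (φ.symm w) = w := φ.apply_symm_apply w
  -- the walk starts in V a \ {u}, avoids u, hence ends in V a : contradiction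
  have : w ∈ V a := by
    have := aux_stay X (V a) u hnbr (q'.copy hss hww)
      (by rwa [SimpleGraph.Walk.support_copy]) hs hsu
    exact this
  exact hwA this
end
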